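/- Let κ be an irrational real number, let ι be a nonempty finite index type, and for each j ∈ ι let n_j be a positive integer. Consider the algebra A = Π_{j ∈ ι} M_{n_j}(ℂ) (the finite direct product of matrix algebras, with componentwise star). Then there is no finite list of elements of A, each self-adjoint and unitary, whose product equals e^{2πiκ} times the identity of A. -/

import Mathlib

/-- For an irrational `κ` and a finite direct product of matrix algebras
`A = Π j, M_{n j}(ℂ)`, no finite product of self-adjoint unitary elements of `A`
equals `e^{2πiκ}` times the identity of `A`. -/
theorem no_prod_selfAdjoint_unitaries_eq_exp_smul_one_pi
    (κ : ℝ) (hκ : Irrational κ)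
    (ι : Type*) [Fintype ι] [Nonempty ι] (n : ι → ℕ) (hn : ∀ j, 0 < n j) :
    ¬ ∃ L : List (Π j, Matrix (Fin (n j)) (Fin (n j)) ℂ),
        (∀ S ∈ L, S = star S ∧ star S * S = 1) ∧
        L.prod = Complex.exp (2 * Real.pi * Complex.I * κ)
          • (1 : Π j, Matrix (Fin (n j)) (Fin (n j)) ℂ) := by
  rintro ⟨L, hSA, hprod⟩
  set c : ℂ := Complex.exp (2 * Real.pi * Complex.I * κ) with hc
  obtain ⟨j⟩ := ‹Nonempty ι›
  -- component at j
  have hj : (L.map (Pi.evalMonoidHom (fun j => Matrix (Fin (n j)) (Fin (n j)) ℂ) j)).prod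
      = c • (1 : Matrix (Fin (n j)) (Fin (n j)) ℂ) := by
    rw [← map_list_prod, hprod]
    simp [Pi.evalMonoidHom]
  -- determinant squared of each factor is 1
  have hd2 : ∀ S ∈ L, ((S j).det) ^ 2 = 1 := by
    intro S hS
    obtain ⟨h1, h2⟩ := hSA S hS
    have hsq : S j * S j = 1 := by
      have h2j := congrFun h2 j
      have h1j := congrFun h1 j
      simpa [← h1j] using h2j
    have := congrArg Matrix.det hsq
    simpa [Matrix.det_mul, sq] using this
  -- determinant of product squared is 1
  have hdprod2 : (((L.map (Pi.evalMonoidHom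
      (fun j => Matrix (Fin (n j)) (Fin (n j)) ℂ) j)).prod).det) ^ 2 = 1 := by
    rw [← Matrix.coe_detMonoidHom, map_list_prod, List.map_map]
    rw [show ∀ x : ℂ, x ^ 2 = (powMonoidHom 2 : ℂ →* ℂ) x from fun _ => rfl,
      map_list_prod, List.map_map]
    apply List.prod_eq_one
    intro x hx
    simp only [List.mem_map, Function.comp] at hx
    obtain ⟨S, hS, rfl⟩ := hx
    simpa using hd2 S hS
  -- but determinant of RHS is c ^ (n j)
  rw [hj] at hdprod2
  have hrhs : (c • (1 : Matrix (Fin (n j)) (Fin (n j)) ℂ)).det = c ^ (n j) := by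
    rw [Matrix.smul_eq_diagonal_mul, Matrix.det_mul, Matrix.det_one, mul_one,
      Matrix.det_diagonal]
    simp
  rw [hrhs, ← pow_mul, mul_comm (n j) 2] at hdprod2
  -- hence exp(2πi κ * (2 n j)) = 1, contradicting irrationality
  rw [hc, ← Complex.exp_nat_mul, Complex.exp_eq_one_iff] at hdprod2
  obtain ⟨k, hk⟩ := hdprod2
  apply hκ
  have hnj : (0:ℝ) < ((2 * n j : ℕ) : ℝ) := by
    have := hn j; positivity
  refine ⟨(k : ℚ) / ((2 * n j : ℕ) : ℚ), ?_⟩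
  have h2pi : (2 * Real.pi * Complex.I : ℂ) ≠ 0 := by
    simp [Real.pi_ne_zero, Complex.I_ne_zero, Complex.ext_iff]
  have hk' : ((2 * n j : ℕ) : ℂ) * κ = k := by
    have h : (2 * Real.pi * Complex.I) * (((2 * n j : ℕ) : ℂ) * κ)
        = (2 * Real.pi * Complex.I) * k := by linear_combination hk
    exact mul_left_cancel₀ h2pi h
  have hk'' : ((2 * n j : ℕ) : ℝ) * κ = k := by exact_mod_cast hk'
  push_cast
  push_cast at hnj
  field_simp
  push_cast at hk''
  rw [div_eq_iff (ne_of_gt (by linarith))]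
  linarith [hk'']
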